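/- (Theorem 1, general step size.) Let A be a (κ,γ)-strongly stable continuous linear map on a finite-dimensional real inner product space E, let X ⊆ E be nonempty, and let Π : E → E satisfy Π y ∈ X and ‖Π y − x‖ ≤ ‖y − x‖ for all y ∈ E and x ∈ X. Let L > 0, D > 0, η > 0, T ≥ 1, and let (f_t)_{t=1}^T be convex differentiable real-valued functions on E. Suppose the sequences (x_t) and (z_t) satisfy: z_1 ∈ X, z_{t+1} = Π(z_t − η·∇f_t(x_t)), x_{t+1} = A x_t + (I − A) z_t for all 1 ≤ t ≤ T, with ‖x_t‖ ≤ D, ‖z_t‖ ≤ D, and ‖∇f_t(x_t)‖ ≤ L·D for all t. Then for every x* ∈ X with ‖x*‖ ≤ D, Σ_{t=1}^T (f_t(x_t) − f_t(x*)) ≤ 2D²/η + η·L²·D²·T·(1 + 4κ²)/(2γ²) + 2·L·D²·κ/γ. -/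

import Mathlib

lemma grad_convex_le {E : Type*} [NormedAddCommGroup E] [InnerProductSpace ℝ E]
    [CompleteSpace E] {f : E → ℝ} (hc : ConvexOn ℝ Set.univ f) (hd : Differentiable ℝ f)
    (a b : E) : f a + (inner ℝ (gradient f a) (b - a) : ℝ) ≤ f b := by
  set φ : ℝ →ᵃ[ℝ] E := AffineMap.lineMap a b with hφdef
  have hg : ConvexOn ℝ Set.univ (f ∘ φ) := by
    simpa using hc.comp_affineMap φ
  have hφ : HasDerivAt (fun s : ℝ => φ s) (b - a) 0 := by
    simp only [hφdef, AffineMap.coe_lineMap, vsub_eq_sub, vadd_eq_add]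
    simpa using ((hasDerivAt_id (0:ℝ)).smul_const (b - a)).add_const a
  have hfa : HasFDerivAt f (InnerProductSpace.toDual ℝ E (gradient f a) : E →L[ℝ] ℝ) a :=
    ((hd a).hasGradientAt).hasFDerivAt
  have h0 : φ 0 = a := AffineMap.lineMap_apply_zero a b
  have hcomp : HasDerivAt (f ∘ φ) ((inner ℝ (gradient f a) (b - a) : ℝ)) 0 := by
    have hfa' : HasFDerivAt f (InnerProductSpace.toDual ℝ E (gradient f a) : E →L[ℝ] ℝ)
        (φ 0) := by rw [h0]; exact hfa
    have := hfa'.comp_hasDerivAt 0 hφ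
    simpa [InnerProductSpace.toDual_apply_apply] using this
  have hslope := hg.le_slope_of_hasDerivAt (Set.mem_univ (0:ℝ)) (Set.mem_univ 1)
    zero_lt_one hcomp
  have h1 : φ 1 = b := AffineMap.lineMap_apply_one a b
  rw [slope_def_field] at hslope
  simp only [Function.comp_apply, h0, h1] at hslope
  have : (inner ℝ (gradient f a) (b - a) : ℝ) ≤ f b - f a := by
    simpa using hslope
  linarith

lemma geom_aux {r : ℝ} (h0 : 0 ≤ r) (h1 : r < 1) (n : ℕ) :
    ∑ i ∈ Finset.range n, r ^ i ≤ (1 - r)⁻¹ := by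
  have h2 : (0:ℝ) < 1 - r := by linarith
  rw [geom_sum_eq (ne_of_lt h1) n]
  have key : (r ^ n - 1) / (r - 1) = (1 - r ^ n) * (1 - r)⁻¹ := by
    rw [eq_comm, mul_comm, inv_mul_eq_div, div_eq_div_iff (by linarith) (by linarith)]
    ring
  rw [key]
  have hle : 1 - r ^ n ≤ 1 := by nlinarith [pow_nonneg h0 n]
  calc (1 - r ^ n) * (1 - r)⁻¹ ≤ 1 * (1 - r)⁻¹ :=
        mul_le_mul_of_nonneg_right hle (inv_nonneg.mpr h2.le)
    _ = (1 - r)⁻¹ := one_mul _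

/-- A continuous linear map `A` is `(κ,γ)`-strongly stable if `A = H ∘ J ∘ H⁻¹` for some
invertible continuous linear map `H` and continuous linear map `J` with `‖J‖ ≤ 1 - γ` and
`‖H‖·‖H⁻¹‖ ≤ κ`. -/
def StronglyStable {E : Type*} [NormedAddCommGroup E] [InnerProductSpace ℝ E]
    (κ γ : ℝ) (A : E →L[ℝ] E) : Prop :=
  ∃ (H : E ≃L[ℝ] E) (J : E →L[ℝ] E),
    A = (H : E →L[ℝ] E).comp (J.comp (H.symm : E →L[ℝ] E)) ∧
      ‖J‖ ≤ 1 - γ ∧ ‖(H : E →L[ℝ] E)‖ * ‖(H.symm : E →L[ℝ] E)‖ ≤ κ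

set_option maxHeartbeats 2000000 in
/-- Theorem 1, general step size: regret bound of the online linear control
algorithm without disturbances, for an arbitrary step size `η`. -/
theorem online_linear_control_regret_general_step {E : Type*}
    [NormedAddCommGroup E] [InnerProductSpace ℝ E] [FiniteDimensional ℝ E]
    {κ γ L D η : ℝ} (hκ : 0 < κ) (hγ : 0 < γ) (hγ1 : γ ≤ 1) (hL : 0 < L) (hD : 0 < D)
    (hη : 0 < η)
    {A : E →L[ℝ] E} (hA : StronglyStable κ γ A)
    (X : Set E) (hX : X.Nonempty) (proj : E → E)
    (hprojX : ∀ y : E, proj y ∈ X)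
    (hproj : ∀ y : E, ∀ x ∈ X, ‖proj y - x‖ ≤ ‖y - x‖)
    (T : ℕ) (hT : 1 ≤ T) (f : ℕ → E → ℝ)
    (hconv : ∀ t ∈ Finset.Icc 1 T, ConvexOn ℝ Set.univ (f t))
    (hdiff : ∀ t ∈ Finset.Icc 1 T, Differentiable ℝ (f t))
    (x z : ℕ → E) (hz1 : z 1 ∈ X)
    (hzrec : ∀ t : ℕ, 1 ≤ t → t ≤ T → z (t + 1) = proj (z t - η • gradient (f t) (x t)))
    (hxrec : ∀ t : ℕ, 1 ≤ t → t ≤ T → x (t + 1) = A (x t) + ((1 : E →L[ℝ] E) - A) (z t))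
    (hxbd : ∀ t ∈ Finset.Icc 1 T, ‖x t‖ ≤ D)
    (hzbd : ∀ t ∈ Finset.Icc 1 T, ‖z t‖ ≤ D)
    (hgradbd : ∀ t ∈ Finset.Icc 1 T, ‖gradient (f t) (x t)‖ ≤ L * D) :
    ∀ xs ∈ X, ‖xs‖ ≤ D →
      ∑ t ∈ Finset.Icc 1 T, (f t (x t) - f t xs) ≤
        2 * D ^ 2 / η + η * L ^ 2 * D ^ 2 * T * (1 + 4 * κ ^ 2) / (2 * γ ^ 2) +
          2 * L * D ^ 2 * κ / γ := by
  intro xs hxsX hxsD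
  have hT1 : (1:ℕ) ∈ Finset.Icc 1 T := Finset.mem_Icc.mpr ⟨le_refl 1, hT⟩
  have hTR : (1:ℝ) ≤ (T:ℝ) := by exact_mod_cast hT
  rcases subsingleton_or_nontrivial E with hE | hE
  · have hzero : ∀ t ∈ Finset.Icc 1 T, f t (x t) - f t xs = 0 := by
      intro t _; rw [Subsingleton.elim (x t) xs]; ring
    rw [Finset.sum_congr rfl hzero, Finset.sum_const_zero]
    positivity
  obtain ⟨H, J, hAeq, hJnorm, hHκ⟩ := hA
  set c1 : ℝ := ‖(H : E →L[ℝ] E)‖ with hc1def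
  set c2 : ℝ := ‖(H.symm : E →L[ℝ] E)‖ with hc2def
  have hc1 : 0 ≤ c1 := norm_nonneg _
  have hc2 : 0 ≤ c2 := norm_nonneg _
  have hγ' : (0:ℝ) ≤ 1 - γ := by linarith
  have hγ'' : (1:ℝ) - γ < 1 := by linarith
  -- κ ≥ 1
  have hκ1 : 1 ≤ κ := by
    have hcomp : (H : E →L[ℝ] E).comp (H.symm : E →L[ℝ] E) = ContinuousLinearMap.id ℝ E := by
      ext v; simp
    calc (1:ℝ) = ‖ContinuousLinearMap.id ℝ E‖ := (ContinuousLinearMap.norm_id).symm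
      _ = ‖(H : E →L[ℝ] E).comp (H.symm : E →L[ℝ] E)‖ := by rw [hcomp]
      _ ≤ c1 * c2 := ContinuousLinearMap.opNorm_comp_le _ _
      _ ≤ κ := hHκ
  -- membership of z in X
  have hzX : ∀ t : ℕ, 1 ≤ t → t ≤ T + 1 → z t ∈ X := by
    intro t h1 h2
    rcases t with _ | s
    · omega
    rcases s with _ | s'
    · exact hz1
    · rw [hzrec (s' + 1) (by omega) (by omega)]
      exact hprojX _
  -- step bound on z
  have hzstep : ∀ t : ℕ, 1 ≤ t → t ≤ T → ‖z (t + 1) - z t‖ ≤ η * (L * D) := by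
    intro t h1 h2
    rw [hzrec t h1 h2]
    refine (hproj _ (z t) (hzX t h1 (by omega))).trans ?_
    rw [sub_sub_cancel_left, norm_neg, norm_smul, Real.norm_eq_abs, abs_of_pos hη]
    exact mul_le_mul_of_nonneg_left (hgradbd t (Finset.mem_Icc.mpr ⟨h1, h2⟩)) hη.le
  -- per-step convexity bound
  have hconvstep : ∀ t ∈ Finset.Icc 1 T, f t (x t) - f t xs ≤
      (inner ℝ (gradient (f t) (x t)) (z t - xs) : ℝ) + L * D * ‖x t - z t‖ := by
    intro t ht
    have h1 := grad_convex_le (hconv t ht) (hdiff t ht) (x t) xs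
    have h2 : (inner ℝ (gradient (f t) (x t)) (xs - x t) : ℝ)
        = -(inner ℝ (gradient (f t) (x t)) (x t - xs) : ℝ) := by
      rw [← inner_neg_right, neg_sub]
    have h3 : (inner ℝ (gradient (f t) (x t)) (x t - xs) : ℝ)
        = (inner ℝ (gradient (f t) (x t)) (z t - xs) : ℝ)
          + (inner ℝ (gradient (f t) (x t)) (x t - z t) : ℝ) := by
      rw [← inner_add_right]; congr 1; abel
    have h4 : (inner ℝ (gradient (f t) (x t)) (x t - z t) : ℝ) ≤ L * D * ‖x t - z t‖ :=
      (real_inner_le_norm _ _).trans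
        (mul_le_mul_of_nonneg_right (hgradbd t ht) (norm_nonneg _))
    linarith
  -- per-step OGD bound
  have hogd : ∀ t ∈ Finset.Icc 1 T, (inner ℝ (gradient (f t) (x t)) (z t - xs) : ℝ) ≤
      (‖z t - xs‖ ^ 2 - ‖z (t + 1) - xs‖ ^ 2) / (2 * η) + η * (L * D) ^ 2 / 2 := by
    intro t ht
    obtain ⟨h1, h2⟩ := Finset.mem_Icc.mp ht
    have hp : ‖z (t + 1) - xs‖ ≤ ‖z t - η • gradient (f t) (x t) - xs‖ := by
      rw [hzrec t h1 h2]; exact hproj _ xs hxsX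
    have hsq : ‖z (t + 1) - xs‖ ^ 2 ≤ ‖z t - η • gradient (f t) (x t) - xs‖ ^ 2 :=
      pow_le_pow_left₀ (norm_nonneg _) hp 2
    have hex : ‖z t - η • gradient (f t) (x t) - xs‖ ^ 2 = ‖z t - xs‖ ^ 2
        - 2 * (η * (inner ℝ (gradient (f t) (x t)) (z t - xs) : ℝ))
        + η ^ 2 * ‖gradient (f t) (x t)‖ ^ 2 := by
      have e1 : z t - η • gradient (f t) (x t) - xs
          = (z t - xs) - η • gradient (f t) (x t) := by abel
      rw [e1, norm_sub_sq_real, real_inner_smul_right, real_inner_comm, norm_smul,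
        Real.norm_eq_abs, abs_of_pos hη, mul_pow]
    have hgb2 : ‖gradient (f t) (x t)‖ ^ 2 ≤ (L * D) ^ 2 := by
      have := hgradbd t ht
      nlinarith [norm_nonneg (gradient (f t) (x t))]
    have h2η : (0:ℝ) < 2 * η := by linarith
    have key : 2 * η * (inner ℝ (gradient (f t) (x t)) (z t - xs) : ℝ) ≤
        (‖z t - xs‖ ^ 2 - ‖z (t + 1) - xs‖ ^ 2) + η ^ 2 * (L * D) ^ 2 := by
      nlinarith [sq_nonneg η]
    calc (inner ℝ (gradient (f t) (x t)) (z t - xs) : ℝ)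
        = (2 * η * (inner ℝ (gradient (f t) (x t)) (z t - xs) : ℝ)) / (2 * η) := by
          field_simp
      _ ≤ ((‖z t - xs‖ ^ 2 - ‖z (t + 1) - xs‖ ^ 2) + η ^ 2 * (L * D) ^ 2) / (2 * η) :=
          (div_le_div_iff_of_pos_right h2η).mpr key
      _ = (‖z t - xs‖ ^ 2 - ‖z (t + 1) - xs‖ ^ 2) / (2 * η) + η * (L * D) ^ 2 / 2 := by
          field_simp
  -- telescoping sum
  have htel : ∑ t ∈ Finset.Icc 1 T, (‖z t - xs‖ ^ 2 - ‖z (t + 1) - xs‖ ^ 2)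
      = ‖z 1 - xs‖ ^ 2 - ‖z (T + 1) - xs‖ ^ 2 := by
    have htel0 : ∀ n : ℕ, ∑ t ∈ Finset.Icc 1 n, (‖z t - xs‖ ^ 2 - ‖z (t + 1) - xs‖ ^ 2)
        = ‖z 1 - xs‖ ^ 2 - ‖z (n + 1) - xs‖ ^ 2 := by
      intro n
      induction n with
      | zero => simp
      | succ m ih => rw [Finset.sum_Icc_succ_top (by omega), ih]; ring
    exact htel0 T
  -- sum of inner products bound
  have hA1 : ∑ t ∈ Finset.Icc 1 T, (inner ℝ (gradient (f t) (x t)) (z t - xs) : ℝ)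
      ≤ 2 * D ^ 2 / η + η * L ^ 2 * D ^ 2 * T / 2 := by
    have hsum := Finset.sum_le_sum hogd
    rw [Finset.sum_add_distrib, ← Finset.sum_div, htel, Finset.sum_const,
      Nat.card_Icc, Nat.add_sub_cancel, nsmul_eq_mul] at hsum
    have hz1b : ‖z 1 - xs‖ ^ 2 ≤ 4 * D ^ 2 := by
      have hb : ‖z 1 - xs‖ ≤ 2 * D := by
        have := hzbd 1 hT1
        calc ‖z 1 - xs‖ ≤ ‖z 1‖ + ‖xs‖ := norm_sub_le _ _
          _ ≤ 2 * D := by linarith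
      nlinarith [norm_nonneg (z 1 - xs)]
    have hzT : (0:ℝ) ≤ ‖z (T + 1) - xs‖ ^ 2 := sq_nonneg _
    have hd1 : (‖z 1 - xs‖ ^ 2 - ‖z (T + 1) - xs‖ ^ 2) / (2 * η) ≤ 2 * D ^ 2 / η := by
      rw [div_le_div_iff₀ (by linarith) hη]
      nlinarith
    have hd2 : (T:ℝ) * (η * (L * D) ^ 2 / 2) = η * L ^ 2 * D ^ 2 * T / 2 := by ring
    linarith
  -- induction bound on the transformed state
  have hwbd : ∀ t : ℕ, 1 ≤ t → t ≤ T + 1 →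
      ‖(H.symm : E →L[ℝ] E) (x t - z t)‖ ≤
        (1 - γ) ^ (t - 1) * (2 * D * c2) + η * L * D * c2 / γ := by
    intro t
    induction t with
    | zero => intro h; omega
    | succ s ih =>
      intro _ h2
      have hnn : 0 ≤ η * L * D * c2 / γ := by positivity
      by_cases hs : s = 0
      · subst hs
        have hb : ‖(H.symm : E →L[ℝ] E) (x 1 - z 1)‖ ≤ c2 * ‖x 1 - z 1‖ :=
          (H.symm : E →L[ℝ] E).le_opNorm _
        have hb2 : ‖x 1 - z 1‖ ≤ 2 * D := by
          have h1 := hxbd 1 hT1; have h2 := hzbd 1 hT1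
          calc ‖x 1 - z 1‖ ≤ ‖x 1‖ + ‖z 1‖ := norm_sub_le _ _
            _ ≤ 2 * D := by linarith
        have : ‖(H.symm : E →L[ℝ] E) (x 1 - z 1)‖ ≤ c2 * (2 * D) :=
          hb.trans (mul_le_mul_of_nonneg_left hb2 hc2)
        simp only [Nat.sub_self, pow_zero, one_mul]
        linarith
      · have hs1 : 1 ≤ s := Nat.one_le_iff_ne_zero.mpr hs
        have hsT : s ≤ T := by omega
        have hprev := ih hs1 (by omega)
        have hw : (H.symm : E →L[ℝ] E) (x (s + 1) - z (s + 1))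
            = J ((H.symm : E →L[ℝ] E) (x s - z s))
              + (H.symm : E →L[ℝ] E) (z s - z (s + 1)) := by
          have hx1 : x (s + 1) - z (s + 1) = A (x s - z s) + (z s - z (s + 1)) := by
            rw [hxrec s hs1 hsT]
            simp only [ContinuousLinearMap.sub_apply, ContinuousLinearMap.one_apply, map_sub]
            abel
          rw [hx1, map_add]
          congr 1
          rw [hAeq]
          simp [ContinuousLinearMap.comp_apply]
        have hb1 : ‖J ((H.symm : E →L[ℝ] E) (x s - z s))‖
            ≤ (1 - γ) * ‖(H.symm : E →L[ℝ] E) (x s - z s)‖ :=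
          (J.le_opNorm _).trans (mul_le_mul_of_nonneg_right hJnorm (norm_nonneg _))
        have hb2 : ‖(H.symm : E →L[ℝ] E) (z s - z (s + 1))‖ ≤ c2 * (η * (L * D)) := by
          refine ((H.symm : E →L[ℝ] E).le_opNorm _).trans ?_
          rw [norm_sub_rev]
          exact mul_le_mul_of_nonneg_left (hzstep s hs1 hsT) hc2
        have hpow : (1 - γ) ^ s = (1 - γ) * (1 - γ) ^ (s - 1) := by
          conv_lhs => rw [show s = (s - 1) + 1 by omega]
          rw [pow_succ]; ring
        have hfrac : (1 - γ) * (η * L * D * c2 / γ) + c2 * (η * (L * D))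
            = η * L * D * c2 / γ := by
          field_simp; ring
        calc ‖(H.symm : E →L[ℝ] E) (x (s + 1) - z (s + 1))‖
            ≤ ‖J ((H.symm : E →L[ℝ] E) (x s - z s))‖
              + ‖(H.symm : E →L[ℝ] E) (z s - z (s + 1))‖ := by rw [hw]; exact norm_add_le _ _
          _ ≤ (1 - γ) * ‖(H.symm : E →L[ℝ] E) (x s - z s)‖ + c2 * (η * (L * D)) :=
              add_le_add hb1 hb2
          _ ≤ (1 - γ) * ((1 - γ) ^ (s - 1) * (2 * D * c2) + η * L * D * c2 / γ)
              + c2 * (η * (L * D)) := by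
              have := mul_le_mul_of_nonneg_left hprev hγ'
              linarith
          _ = (1 - γ) ^ s * (2 * D * c2) + η * L * D * c2 / γ := by
              rw [hpow]; linarith [hfrac]
          _ = (1 - γ) ^ (s + 1 - 1) * (2 * D * c2) + η * L * D * c2 / γ := by
              rw [Nat.add_sub_cancel]
  -- per-step bound on ‖x t - z t‖
  have hxz : ∀ t ∈ Finset.Icc 1 T, ‖x t - z t‖ ≤
      2 * D * (c1 * c2) * (1 - γ) ^ (t - 1) + η * L * D * (c1 * c2) / γ := by
    intro t ht
    obtain ⟨h1, h2⟩ := Finset.mem_Icc.mp ht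
    have heq : x t - z t = H ((H.symm : E →L[ℝ] E) (x t - z t)) := by simp
    have hb : ‖x t - z t‖ ≤ c1 * ‖(H.symm : E →L[ℝ] E) (x t - z t)‖ := by
      conv_lhs => rw [heq]
      exact (H : E →L[ℝ] E).le_opNorm _
    have := hwbd t h1 (by omega)
    calc ‖x t - z t‖ ≤ c1 * ((1 - γ) ^ (t - 1) * (2 * D * c2) + η * L * D * c2 / γ) :=
          hb.trans (mul_le_mul_of_nonneg_left this hc1)
      _ = 2 * D * (c1 * c2) * (1 - γ) ^ (t - 1) + η * L * D * (c1 * c2) / γ := by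
          field_simp
  -- sum bound on ‖x t - z t‖
  have hB : ∑ t ∈ Finset.Icc 1 T, ‖x t - z t‖ ≤ κ * (2 * D + η * L * D * T) / γ := by
    have hsum := Finset.sum_le_sum hxz
    rw [Finset.sum_add_distrib, ← Finset.mul_sum, Finset.sum_const, Nat.card_Icc,
      Nat.add_sub_cancel, nsmul_eq_mul] at hsum
    have hgeo : ∑ t ∈ Finset.Icc 1 T, (1 - γ) ^ (t - 1) ≤ γ⁻¹ := by
      have e : ∀ n : ℕ, ∑ t ∈ Finset.Icc 1 n, (1 - γ) ^ (t - 1)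
          = ∑ i ∈ Finset.range n, (1 - γ) ^ i := by
        intro n
        induction n with
        | zero => simp
        | succ m ih =>
          rw [Finset.sum_Icc_succ_top (by omega), ih, Finset.sum_range_succ,
            Nat.add_sub_cancel]
      rw [e]
      have := geom_aux hγ' hγ'' T
      rwa [sub_sub_cancel] at this
    have hcc : 0 ≤ c1 * c2 := mul_nonneg hc1 hc2
    have h1 : 2 * D * (c1 * c2) * (∑ t ∈ Finset.Icc 1 T, (1 - γ) ^ (t - 1))
        ≤ 2 * D * (c1 * c2) * γ⁻¹ :=
      mul_le_mul_of_nonneg_left hgeo (by positivity)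
    have h2 : (c1 * c2) * (2 * D + η * L * D * T) / γ ≤ κ * (2 * D + η * L * D * T) / γ := by
      apply div_le_div_of_nonneg_right ?_ hγ.le
      exact mul_le_mul_of_nonneg_right hHκ (by positivity)
    have h3 : 2 * D * (c1 * c2) * γ⁻¹ + (T:ℝ) * (η * L * D * (c1 * c2) / γ)
        = (c1 * c2) * (2 * D + η * L * D * T) / γ := by
      field_simp
    linarith
  -- combine
  have hfinal : ∑ t ∈ Finset.Icc 1 T, (f t (x t) - f t xs)
      ≤ (2 * D ^ 2 / η + η * L ^ 2 * D ^ 2 * T / 2)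
        + L * D * (κ * (2 * D + η * L * D * T) / γ) := by
    have hsum := Finset.sum_le_sum hconvstep
    rw [Finset.sum_add_distrib, ← Finset.mul_sum] at hsum
    have := mul_le_mul_of_nonneg_left hB (by positivity : (0:ℝ) ≤ L * D)
    linarith
  refine hfinal.trans ?_
  have hcore : γ ^ 2 + 2 * κ * γ ≤ 1 + 4 * κ ^ 2 := by nlinarith
  have hsplit : L * D * (κ * (2 * D + η * L * D * T) / γ)
      = 2 * L * D ^ 2 * κ / γ + η * L ^ 2 * D ^ 2 * (T:ℝ) * κ / γ := by
    field_simp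
  have hS : (0:ℝ) ≤ η * L ^ 2 * D ^ 2 * (T:ℝ) := by positivity
  have hfrac : 1 / 2 + κ / γ ≤ (1 + 4 * κ ^ 2) / (2 * γ ^ 2) := by
    rw [div_add_div _ _ (two_ne_zero) hγ.ne', div_le_div_iff₀ (by positivity) (by positivity)]
    nlinarith [mul_le_mul_of_nonneg_left hcore hγ.le]
  have hmid : η * L ^ 2 * D ^ 2 * (T:ℝ) / 2 + η * L ^ 2 * D ^ 2 * (T:ℝ) * κ / γ
      ≤ η * L ^ 2 * D ^ 2 * (T:ℝ) * (1 + 4 * κ ^ 2) / (2 * γ ^ 2) := by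
    have h := mul_le_mul_of_nonneg_left hfrac hS
    calc η * L ^ 2 * D ^ 2 * (T:ℝ) / 2 + η * L ^ 2 * D ^ 2 * (T:ℝ) * κ / γ
        = η * L ^ 2 * D ^ 2 * (T:ℝ) * (1 / 2 + κ / γ) := by ring
      _ ≤ η * L ^ 2 * D ^ 2 * (T:ℝ) * ((1 + 4 * κ ^ 2) / (2 * γ ^ 2)) := h
      _ = η * L ^ 2 * D ^ 2 * (T:ℝ) * (1 + 4 * κ ^ 2) / (2 * γ ^ 2) := by ring
  linarith [hsplit, hmid]
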